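/- Let ν ∈ ℝ and for t > 0 define K_ν(t) = ∫₀^∞ e^{-t cosh z} cosh(ν z) dz. Then K_ν satisfies the modified Bessel equation t² K_ν''(t) + t K_ν'(t) - (t² + ν²) K_ν(t) = 0 for all t > 0. -/

import Mathlib

open Real MeasureTheory Set Filter Topology

noncomputable def besselK (ν t : ℝ) : ℝ :=
  ∫ z in Set.Ioi (0:ℝ), Real.exp (-t * Real.cosh z) * Real.cosh (ν * z)

namespace BesselKAux

lemma sq_div_four_le_exp {z : ℝ} (hz : 0 ≤ z) : z^2/4 ≤ Real.exp z := by
  have h := Real.add_one_le_exp (z/2)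
  have h2 : Real.exp (z/2) * Real.exp (z/2) = Real.exp z := by
    rw [← Real.exp_add]; ring_nf
  nlinarith [h, h2, hz]

lemma key_ineq (b : ℝ) {c z : ℝ} (hc : 0 < c) (hz : 0 ≤ z) :
    b * z - c * Real.exp z ≤ (b+1)^2 / c - z := by
  have hez := sq_div_four_le_exp hz
  have hd : (b+1)^2 / c * c = (b+1)^2 := div_mul_cancel₀ _ hc.ne'
  nlinarith [sq_nonneg (c*z - 2*(b+1)), mul_pos hc hc, hez, hc]

lemma integrable_aux (b : ℝ) {c : ℝ} (hc : 0 < c) :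
    IntegrableOn (fun z => Real.exp (b * z - c * Real.exp z)) (Ioi 0) := by
  have hg : IntegrableOn (fun z : ℝ => Real.exp ((b+1)^2/c) * Real.exp (-1 * z)) (Ioi 0) :=
    (exp_neg_integrableOn_Ioi 0 one_pos).const_mul _
  refine hg.mono' ?_ ?_
  · exact (Real.continuous_exp.comp (by continuity)).aestronglyMeasurable
  · filter_upwards [ae_restrict_mem measurableSet_Ioi] with z hz
    rw [Real.norm_eq_abs, abs_of_pos (Real.exp_pos _), ← Real.exp_add]
    apply Real.exp_le_exp.mpr
    have := key_ineq b hc (le_of_lt hz)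
    linarith

/-- The integrand family. -/
noncomputable def G (ν t : ℝ) (k : ℕ) (z : ℝ) : ℝ :=
  Real.cosh z ^ k * (Real.exp (-t * Real.cosh z) * Real.cosh (ν * z))

lemma G_nonneg (ν t : ℝ) (k : ℕ) (z : ℝ) : 0 ≤ G ν t k z := by
  unfold G; positivity

lemma cosh_le_exp {z : ℝ} (hz : 0 ≤ z) : Real.cosh z ≤ Real.exp z := by
  rw [Real.cosh_eq]
  have : Real.exp (-z) ≤ Real.exp z := Real.exp_le_exp.mpr (by linarith)
  linarith

lemma cosh_le_exp_abs (x : ℝ) : Real.cosh x ≤ Real.exp |x| := by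
  rw [← Real.cosh_abs]; exact cosh_le_exp (abs_nonneg x)

lemma half_exp_le_cosh (z : ℝ) : Real.exp z / 2 ≤ Real.cosh z := by
  rw [Real.cosh_eq]
  have := (Real.exp_pos (-z)).le
  linarith

lemma G_le (ν : ℝ) (k : ℕ) {a t z : ℝ} (ha : 0 < a) (hta : a ≤ t) (hz : 0 ≤ z) :
    G ν t k z ≤ Real.exp ((k + |ν|) * z - (a/2) * Real.exp z) := by
  have h1 : Real.cosh z ^ k ≤ Real.exp ((k : ℝ) * z) := by
    calc Real.cosh z ^ k ≤ Real.exp z ^ k :=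
          pow_le_pow_left₀ (Real.cosh_pos z).le (cosh_le_exp hz) k
      _ = Real.exp ((k : ℝ) * z) := by rw [← Real.exp_nat_mul]
  have h2 : Real.exp (-t * Real.cosh z) ≤ Real.exp (-(a/2) * Real.exp z) := by
    apply Real.exp_le_exp.mpr
    have hc := half_exp_le_cosh z
    have hcp := (Real.cosh_pos z).le
    nlinarith [Real.exp_pos z]
  have h3 : Real.cosh (ν * z) ≤ Real.exp (|ν| * z) := by
    calc Real.cosh (ν * z) ≤ Real.exp |ν * z| := cosh_le_exp_abs _
      _ = Real.exp (|ν| * z) := by rw [abs_mul, abs_of_nonneg hz]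
  calc G ν t k z ≤ Real.exp ((k:ℝ)*z) * (Real.exp (-(a/2) * Real.exp z) * Real.exp (|ν| * z)) := by
        unfold G
        apply mul_le_mul h1 (mul_le_mul h2 h3 (Real.cosh_pos _).le (Real.exp_pos _).le)
          (by positivity) (Real.exp_pos _).le
    _ = Real.exp ((k + |ν|) * z - (a/2) * Real.exp z) := by
        rw [← Real.exp_add, ← Real.exp_add]; ring_nf

lemma G_continuous (ν t : ℝ) (k : ℕ) : Continuous (G ν t k) := by
  unfold G; continuity

lemma G_integrable (ν : ℝ) (k : ℕ) {t : ℝ} (ht : 0 < t) :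
    IntegrableOn (G ν t k) (Ioi 0) := by
  refine (integrable_aux ((k : ℝ) + |ν|) (by positivity : (0:ℝ) < t/2)).mono'
    (G_continuous ν t k).aestronglyMeasurable ?_
  filter_upwards [ae_restrict_mem measurableSet_Ioi] with z hz
  rw [Real.norm_eq_abs, abs_of_nonneg (G_nonneg ν t k z)]
  exact G_le ν k ht le_rfl (le_of_lt hz)

/-- integral of the family -/
noncomputable def Kf (ν : ℝ) (k : ℕ) (t : ℝ) : ℝ := ∫ z in Ioi (0:ℝ), G ν t k z

lemma besselK_eq (ν : ℝ) : besselK ν = Kf ν 0 := by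
  funext t; unfold besselK Kf G; simp

lemma G_hasDerivAt (ν : ℝ) (k : ℕ) (z : ℝ) (s : ℝ) :
    HasDerivAt (fun u => G ν u k z) (-G ν s (k+1) z) s := by
  have h : HasDerivAt (fun u : ℝ => Real.exp (-u * Real.cosh z))
      (-Real.cosh z * Real.exp (-s * Real.cosh z)) s := by
    have h0 : HasDerivAt (fun u : ℝ => -u * Real.cosh z) (-Real.cosh z) s := by
      simpa using (hasDerivAt_id s).neg.mul_const (Real.cosh z)
    simpa [mul_comm] using h0.exp
  have := ((h.mul_const (Real.cosh (ν * z))).const_mul (Real.cosh z ^ k))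
  refine this.congr_deriv ?_
  unfold G; ring

lemma Kf_hasDerivAt (ν : ℝ) (k : ℕ) {t : ℝ} (ht : 0 < t) :
    HasDerivAt (Kf ν k) (-(Kf ν (k+1) t)) t := by
  have ht2 : (0:ℝ) < t/2 := by positivity
  have key := hasDerivAt_integral_of_dominated_loc_of_deriv_le (μ := volume.restrict (Ioi 0))
    (F := fun s z => G ν s k z) (F' := fun s z => -G ν s (k+1) z)
    (bound := fun z => G ν (t/2) (k+1) z) (x₀ := t) (Metric.ball_mem_nhds t ht2)
    (Eventually.of_forall fun s => (G_continuous ν s k).aestronglyMeasurable)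
    (G_integrable ν k ht)
    ((G_continuous ν t (k+1)).neg.aestronglyMeasurable)
    ?_ (G_integrable ν (k+1) ht2) ?_
  · have := key.2; simp only [integral_neg] at this; exact this
  · filter_upwards with z
    intro s hs
    rw [Metric.mem_ball, Real.dist_eq] at hs
    have hst : t/2 ≤ s := by cases abs_lt.mp hs; linarith
    rw [norm_neg, Real.norm_eq_abs, abs_of_nonneg (G_nonneg _ _ _ _)]
    unfold G
    show Real.cosh z ^ (k+1) * (Real.exp (-s * Real.cosh z) * Real.cosh (ν*z)) ≤ Real.cosh z ^ (k+1) * (Real.exp (-(t/2) * Real.cosh z) * Real.cosh (ν*z))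
    gcongr

  · filter_upwards with z
    intro s _
    exact G_hasDerivAt ν k z s


/-- The boundary function for integration by parts. -/
noncomputable def F (ν t z : ℝ) : ℝ :=
  -(Real.exp (-t * Real.cosh z) *
      (t * Real.sinh z * Real.cosh (ν * z) + ν * Real.sinh (ν * z)))

lemma F_hasDerivAt (ν t z : ℝ) :
    HasDerivAt (F ν t)
      ((t^2 * Real.cosh z ^ 2 - t * Real.cosh z - t^2 - ν^2) *
        (Real.exp (-t * Real.cosh z) * Real.cosh (ν * z))) z := by
  have hexp : HasDerivAt (fun z : ℝ => Real.exp (-t * Real.cosh z))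
      (-t * Real.sinh z * Real.exp (-t * Real.cosh z)) z := by
    have h0 : HasDerivAt (fun z : ℝ => -t * Real.cosh z) (-t * Real.sinh z) z :=
      (Real.hasDerivAt_cosh z).const_mul (-t)
    simpa [mul_comm] using h0.exp
  have hν : HasDerivAt (fun z : ℝ => ν * z) ν z := by
    simpa using (hasDerivAt_id z).const_mul ν
  have hcoshν : HasDerivAt (fun z : ℝ => Real.cosh (ν * z)) (Real.sinh (ν*z) * ν) z := hν.cosh
  have hsinhν : HasDerivAt (fun z : ℝ => Real.sinh (ν * z)) (Real.cosh (ν*z) * ν) z := hν.sinh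
  have hsinh := Real.hasDerivAt_sinh z
  have hin : HasDerivAt
      (fun z : ℝ => t * Real.sinh z * Real.cosh (ν * z) + ν * Real.sinh (ν * z))
      (t * Real.cosh z * Real.cosh (ν*z) + t * Real.sinh z * (Real.sinh (ν*z) * ν)
        + ν * (Real.cosh (ν*z) * ν)) z :=
    ((hsinh.const_mul t).mul hcoshν).add (hsinhν.const_mul ν)
  have key := (hexp.mul hin).neg
  refine key.congr_deriv ?_
  have hs : Real.sinh z ^ 2 = Real.cosh z ^ 2 - 1 := Real.sinh_sq z
  linear_combination (t^2 * Real.exp (-t*Real.cosh z) * Real.cosh (ν*z)) * hs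

lemma sinh_abs_le_cosh (x : ℝ) : |Real.sinh x| ≤ Real.cosh x := by
  rw [abs_le]
  constructor <;> rw [Real.sinh_eq, Real.cosh_eq] <;>
    [linarith [Real.exp_pos x]; linarith [Real.exp_pos (-x)]]

lemma F_tendsto (ν : ℝ) {t : ℝ} (ht : 0 < t) : Tendsto (F ν t) atTop (𝓝 0) := by
  apply squeeze_zero_norm'
    (a := fun z => (t + |ν|) * Real.exp ((1 + |ν|) * z - (t/2) * Real.exp z))
  · filter_upwards [eventually_ge_atTop (0:ℝ)] with z hz
    have h1 : ‖F ν t z‖ ≤ (t + |ν|) * G ν t 1 z := by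
      rw [F, norm_neg, Real.norm_eq_abs, abs_mul, abs_of_pos (Real.exp_pos _)]
      have hb : |t * Real.sinh z * Real.cosh (ν * z) + ν * Real.sinh (ν * z)| ≤
          (t + |ν|) * (Real.cosh z * Real.cosh (ν * z)) := by
        refine ((abs_add_le _ _).trans ?_)
        have hc1 : |t * Real.sinh z * Real.cosh (ν * z)| ≤ t * Real.cosh z * Real.cosh (ν*z) := by
          rw [abs_mul, abs_mul, abs_of_pos ht, abs_of_pos (Real.cosh_pos _)]
          exact mul_le_mul_of_nonneg_right
            (mul_le_mul_of_nonneg_left (sinh_abs_le_cosh z) ht.le) (Real.cosh_pos _).le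
        have hc2 : |ν * Real.sinh (ν * z)| ≤ |ν| * Real.cosh (ν*z) := by
          rw [abs_mul]
          exact mul_le_mul_of_nonneg_left (sinh_abs_le_cosh _) (abs_nonneg ν)
        have hcosh1 : (1:ℝ) ≤ Real.cosh z := Real.one_le_cosh z
        have hcn := (Real.cosh_pos (ν*z)).le
        have hx : |ν| * Real.cosh (ν*z) ≤ |ν| * (Real.cosh z * Real.cosh (ν*z)) := by
          nlinarith [mul_nonneg (abs_nonneg ν) hcn]
        nlinarith [hc1, hc2, hx]
      calc Real.exp (-t * Real.cosh z) * |t * Real.sinh z * Real.cosh (ν * z) + ν * Real.sinh (ν * z)|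
          ≤ Real.exp (-t * Real.cosh z) * ((t + |ν|) * (Real.cosh z * Real.cosh (ν * z))) :=
            mul_le_mul_of_nonneg_left hb (Real.exp_pos _).le
        _ = (t + |ν|) * G ν t 1 z := by unfold G; ring
    refine h1.trans ?_
    have h3 := G_le ν 1 ht le_rfl hz
    have hnn : (0:ℝ) ≤ t + |ν| := by positivity
    refine (mul_le_mul_of_nonneg_left ?_ hnn)
    simpa using h3
  · have hu : Tendsto (fun z : ℝ => (1 + |ν|) * z - (t/2) * Real.exp z) atTop atBot := by
      have hle : (fun z : ℝ => (1 + |ν|) * z - (t/2) * Real.exp z) ≤ᶠ[atTop]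
          fun z => ((1 + |ν|)+1)^2/(t/2) - z := by
        filter_upwards [eventually_ge_atTop (0:ℝ)] with z hz
        exact key_ineq (1 + |ν|) (by positivity) hz
      have hb : Tendsto (fun z : ℝ => ((1 + |ν|)+1)^2/(t/2) - z) atTop atBot := by
        have h' : Tendsto (fun z : ℝ => ((1 + |ν|)+1)^2/(t/2) + -z) atTop atBot :=
          tendsto_atBot_add_const_left _ _ tendsto_neg_atTop_atBot
        simpa [sub_eq_add_neg] using h'
      exact tendsto_atBot_mono' atTop hle hb
    have := (Real.tendsto_exp_atBot.comp hu).const_mul (t + |ν|)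
    simpa using this

end BesselKAux

theorem besselK_ode (ν : ℝ) :
    ∀ t : ℝ, 0 < t →
      t ^ 2 * deriv (deriv (besselK ν)) t + t * deriv (besselK ν) t
        - (t ^ 2 + ν ^ 2) * besselK ν t = 0 := by
  intro t ht
  open BesselKAux in
  have h1 : ∀ s : ℝ, 0 < s → HasDerivAt (besselK ν) (-(Kf ν 1 s)) s := by
    intro s hs
    rw [besselK_eq]
    exact Kf_hasDerivAt ν 0 hs
  have hd1 : deriv (besselK ν) t = -(Kf ν 1 t) := (h1 t ht).deriv
  have h2 : HasDerivAt (deriv (besselK ν)) (Kf ν 2 t) t := by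
    have hev : deriv (besselK ν) =ᶠ[nhds t] fun s => -(Kf ν 1 s) := by
      filter_upwards [Ioi_mem_nhds ht] with s hs
      exact (h1 s hs).deriv
    have hneg : HasDerivAt (fun s => -(Kf ν 1 s)) (Kf ν 2 t) t := by
      have := (Kf_hasDerivAt ν 1 ht).neg; rw [neg_neg] at this; exact this
    exact hneg.congr_of_eventuallyEq hev
  have hd2 : deriv (deriv (besselK ν)) t = Kf ν 2 t := h2.deriv
  -- the FTC computation
  set h : ℝ → ℝ := fun z => (t^2 * Real.cosh z ^ 2 - t * Real.cosh z - t^2 - ν^2) *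
    (Real.exp (-t * Real.cosh z) * Real.cosh (ν * z)) with hh
  have hcombo : h = fun z => t^2 * G ν t 2 z - t * G ν t 1 z - (t^2 + ν^2) * G ν t 0 z := by
    funext z; unfold G; rw [hh]; ring
  have hint : IntegrableOn h (Ioi (0:ℝ)) := by
    rw [hcombo]
    exact (((G_integrable ν 2 ht).const_mul _).sub ((G_integrable ν 1 ht).const_mul _)).sub
      ((G_integrable ν 0 ht).const_mul _)
  have hFTC : ∫ z in Ioi (0:ℝ), h z = 0 - F ν t 0 := by
    exact integral_Ioi_of_hasDerivAt_of_tendsto' (fun z _ => F_hasDerivAt ν t z) hint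
      (F_tendsto ν ht)
  have hF0 : F ν t 0 = 0 := by simp [F]
  rw [hF0, sub_zero] at hFTC
  have hsplit : ∫ z in Ioi (0:ℝ), h z =
      t^2 * Kf ν 2 t - t * Kf ν 1 t - (t^2 + ν^2) * Kf ν 0 t := by
    have e2 : Integrable (fun z => t^2 * G ν t 2 z) (volume.restrict (Ioi 0)) :=
      (G_integrable ν 2 ht).const_mul _
    have e1 : Integrable (fun z => t * G ν t 1 z) (volume.restrict (Ioi 0)) :=
      (G_integrable ν 1 ht).const_mul _
    have e0 : Integrable (fun z => (t^2 + ν^2) * G ν t 0 z) (volume.restrict (Ioi 0)) :=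
      (G_integrable ν 0 ht).const_mul _
    have e21 : Integrable (fun z => t^2 * G ν t 2 z - t * G ν t 1 z)
        (volume.restrict (Ioi 0)) := e2.sub e1
    rw [hcombo]
    rw [integral_sub e21 e0, integral_sub e2 e1]
    simp only [integral_const_mul]
    rfl
  rw [hd1, hd2, besselK_eq]
  rw [hsplit] at hFTC
  linarith
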